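/- Let T be a finite tile set with symmetric weight functions w_H, w_V : T × T → ℤ (i.e., w_H(a,b) = w_H(b,a) and w_V(a,b) = w_V(b,a)). Let f : ZMod N × ZMod N → T be a toroidal tiling of total cost c (sum of w_V over all vertically adjacent pairs plus w_H over all horizontally adjacent pairs, cyclically). For any row index a, the tiling of the (N+2) × N torus obtained by duplicating rows a and a+1 (inserting copies of row a+1 then row a after row a+1, in reflected order) has total cost exactly c + w(R_a) + w(R_{a+1}) + 2·w(R_a, R_{a+1}), where w(R_b) is the internal horizontal cost of row b and w(R_b, R_{b+1}) is the vertical cost between rows b and b+1. -/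

import Mathlib

instance (n : ℕ) : NeZero (n + 2) := ⟨by omega⟩

/-- Internal horizontal cost of a single (cyclic) row. -/
def rowCost {T : Type*} (wH : T → T → ℤ) (N : ℕ) [NeZero N] (row : ZMod N → T) : ℤ :=
  ∑ j : ZMod N, wH (row j) (row (j + 1))

/-- Vertical cost between two (cyclic) rows. -/
def interCost {T : Type*} (wV : T → T → ℤ) (N : ℕ) [NeZero N] (r₁ r₂ : ZMod N → T) : ℤ :=
  ∑ j : ZMod N, wV (r₁ j) (r₂ j)

/-- Total cost of an `M × N` toroidal tiling (rows indexed by `ZMod M`, columns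
by `ZMod N`, cyclic adjacency in both directions). -/
def torusCost {T : Type*} (wH wV : T → T → ℤ) (M N : ℕ) [NeZero M] [NeZero N]
    (f : ZMod M → ZMod N → T) : ℤ :=
  ∑ i : ZMod M, rowCost wH N (f i) + ∑ i : ZMod M, interCost wV N (f i) (f (i + 1))

/-- Sum over `ZMod M` as a sum over `Finset.range M`. -/
lemma zmodSumRange {M : ℕ} [NeZero M] (F : ZMod M → ℤ) :
    ∑ i : ZMod M, F i = ∑ k ∈ Finset.range M, F (k : ZMod M) := by
  refine Finset.sum_nbij' (fun x : ZMod M => x.val) (fun k : ℕ => (k : ZMod M))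
    (fun x _ => Finset.mem_range.2 x.val_lt) (fun k _ => Finset.mem_univ _)
    (fun x _ => ZMod.natCast_zmod_val x) (fun k hk => ZMod.val_cast_of_lt (Finset.mem_range.1 hk))
    (fun x _ => by rw [ZMod.natCast_zmod_val])

/-- Key arithmetic rearrangement of the duplicated sum. -/
lemma splitSum (f : ℕ → ℤ) (x : ℤ) (v N : ℕ) (hv : v < N) :
    ∑ k ∈ Finset.range (N + 2), (if k ≤ v then f k else if k = v + 1 then x else f (k - 2))
      = ∑ j ∈ Finset.range N, f j + f v + x := by
  have h1 : (v : ℕ) + 1 ≤ N + 2 := by omega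
  rw [Finset.range_eq_Ico, ← Finset.sum_Ico_consecutive _ (Nat.zero_le (v + 1)) h1,
    Finset.sum_eq_sum_Ico_succ_bot (by omega : v + 1 < N + 2)]
  have e1 : ∑ k ∈ Finset.Ico 0 (v + 1),
      (if k ≤ v then f k else if k = v + 1 then x else f (k - 2)) = ∑ k ∈ Finset.Ico 0 (v + 1), f k := by
    refine Finset.sum_congr rfl fun k hk => ?_
    simp only [Finset.mem_Ico] at hk
    rw [if_pos (by omega)]
  have e2 : (if v + 1 ≤ v then f (v + 1) else if v + 1 = v + 1 then x else f (v + 1 - 2)) = x := by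
    rw [if_neg (by omega), if_pos rfl]
  have e3 : ∑ k ∈ Finset.Ico (v + 1 + 1) (N + 2),
      (if k ≤ v then f k else if k = v + 1 then x else f (k - 2)) = ∑ j ∈ Finset.Ico v N, f j := by
    rw [Finset.sum_Ico_eq_sum_range, Finset.sum_Ico_eq_sum_range]
    have hn : N + 2 - (v + 1 + 1) = N - v := by omega
    rw [hn]
    refine Finset.sum_congr rfl fun k hk => ?_
    rw [if_neg (by omega), if_neg (by omega)]
    congr 1
    omega
  rw [e1, e2, e3, Finset.sum_eq_sum_Ico_succ_bot (by omega : v < N) f]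
  have e4 : ∑ j ∈ Finset.Ico 0 N, f j
      = ∑ k ∈ Finset.Ico 0 (v + 1), f k + ∑ j ∈ Finset.Ico (v + 1) N, f j :=
    (Finset.sum_Ico_consecutive _ (Nat.zero_le (v + 1)) (by omega)).symm
  simp only [← Finset.range_eq_Ico] at e4 ⊢
  rw [e4]
  ring

lemma interCost_comm {T : Type*} (wV : T → T → ℤ) (hV : ∀ a b : T, wV a b = wV b a)
    (N : ℕ) [NeZero N] (r₁ r₂ : ZMod N → T) :
    interCost wV N r₁ r₂ = interCost wV N r₂ r₁ := by
  unfold interCost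
  exact Finset.sum_congr rfl fun j _ => hV _ _

/-- Duplicating the pair of adjacent rows `a, a+1` of an `N × N` toroidal
tiling with reflection-symmetric weights yields an `(N+2) × N` toroidal tiling
whose total cost is exactly
`c + w(R_a) + w(R_{a+1}) + 2·w(R_a, R_{a+1})`. -/
theorem duplicate_rows_cost {T : Type*} [Fintype T] (wH wV : T → T → ℤ)
    (hH : ∀ a b : T, wH a b = wH b a) (hV : ∀ a b : T, wV a b = wV b a)
    (N : ℕ) [NeZero N] (R : ZMod N → ZMod N → T) (a : ZMod N) :
    torusCost wH wV (N + 2) N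
      (fun k : ZMod (N + 2) =>
        R (if k.val ≤ a.val + 1 then ((k.val : ℕ) : ZMod N)
           else ((k.val - 2 : ℕ) : ZMod N)))
      = torusCost wH wV N N R
        + rowCost wH N (R a) + rowCost wH N (R (a + 1))
        + 2 * interCost wV N (R a) (R (a + 1)) := by
  set v := a.val with hv
  have hvN : v < N := a.val_lt
  have hcast : ((v : ℕ) : ZMod N) = a := ZMod.natCast_zmod_val a
  have hcast1 : ((v + 1 : ℕ) : ZMod N) = a + 1 := by push_cast [hcast]; ring
  set g : ZMod (N + 2) → ZMod N → T := fun k =>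
    R (if k.val ≤ a.val + 1 then ((k.val : ℕ) : ZMod N) else ((k.val - 2 : ℕ) : ZMod N)) with hg
  -- value of g at a casted index
  have hgval : ∀ k : ℕ, k < N + 2 →
      g (k : ZMod (N + 2)) = R (if k ≤ v + 1 then (k : ZMod N) else ((k - 2 : ℕ) : ZMod N)) := by
    intro k hk
    rw [hg]
    simp only [ZMod.val_cast_of_lt hk]
    rfl
  unfold torusCost
  rw [zmodSumRange (fun i => rowCost wH N (g i)),
      zmodSumRange (fun i => interCost wV N (g i) (g (i + 1))),
      zmodSumRange (fun i => rowCost wH N (R i)),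
      zmodSumRange (fun i => interCost wV N (R i) (R (i + 1)))]
  have hrow : ∑ k ∈ Finset.range (N + 2), rowCost wH N (g (k : ZMod (N + 2)))
      = ∑ j ∈ Finset.range N, rowCost wH N (R (j : ZMod N))
        + rowCost wH N (R a) + rowCost wH N (R (a + 1)) := by
    have h := splitSum (fun j => rowCost wH N (R (j : ZMod N))) (rowCost wH N (R (a + 1))) v N hvN
    beta_reduce at h
    rw [hcast] at h
    rw [← h]
    refine Finset.sum_congr rfl fun k hk => ?_
    rw [hgval k (Finset.mem_range.1 hk)]
    rcases le_or_gt k v with h | h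
    · rw [if_pos (by omega), if_pos h]
    · rcases eq_or_ne k (v + 1) with h' | h'
      · rw [if_pos (by omega), if_neg (by omega), if_pos h', h', hcast1]
      · rw [if_neg (by omega), if_neg (by omega), if_neg h']
  have hinter : ∑ k ∈ Finset.range (N + 2),
        interCost wV N (g (k : ZMod (N + 2))) (g ((k : ZMod (N + 2)) + 1))
      = ∑ j ∈ Finset.range N, interCost wV N (R (j : ZMod N)) (R ((j : ZMod N) + 1))
        + interCost wV N (R a) (R (a + 1)) + interCost wV N (R a) (R (a + 1)) := by
    have hX : interCost wV N (R (a + 1)) (R a) = interCost wV N (R a) (R (a + 1)) :=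
      interCost_comm wV hV N _ _
    have key := splitSum (fun j => interCost wV N (R (j : ZMod N)) (R ((j : ZMod N) + 1)))
      (interCost wV N (R (a + 1)) (R a)) v N hvN
    beta_reduce at key
    rw [hX] at key
    have hGv : interCost wV N (R ((v : ℕ) : ZMod N)) (R (((v : ℕ) : ZMod N) + 1))
        = interCost wV N (R a) (R (a + 1)) := by rw [hcast]
    rw [hGv] at key
    rw [← key]
    refine Finset.sum_congr rfl fun k hk => ?_
    have hk' : k < N + 2 := Finset.mem_range.1 hk
    have hsucc : (k : ZMod (N + 2)) + 1 = ((k + 1 : ℕ) : ZMod (N + 2)) := by push_cast; ring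
    rcases eq_or_lt_of_le (Nat.succ_le_of_lt hk') with hke | hklt
    · -- k = N + 1 : wrap-around
      have hkN : k = N + 1 := by omega
      have h0 : ((k + 1 : ℕ) : ZMod (N + 2)) = ((0 : ℕ) : ZMod (N + 2)) := by
        rw [hkN]
        show ((N + 2 : ℕ) : ZMod (N + 2)) = _
        rw [ZMod.natCast_self, Nat.cast_zero]
      rw [hgval k hk', hsucc, h0, hgval 0 (by omega)]
      have hk1 : ¬ k ≤ v + 1 := by omega
      have hk2 : ¬ k ≤ v := by omega
      have hk3 : k ≠ v + 1 := by omega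
      rw [if_neg hk1, if_pos (by omega : (0:ℕ) ≤ v + 1), if_neg hk2, if_neg hk3]
      have hNm : ((k - 2 : ℕ) : ZMod N) = ((N - 1 : ℕ) : ZMod N) := by rw [hkN]; congr 1
      have hN0 : (((N - 1 : ℕ) : ZMod N) + 1) = ((0 : ℕ) : ZMod N) := by
        have : ((N - 1 : ℕ) : ZMod N) + 1 = ((N - 1 + 1 : ℕ) : ZMod N) := by push_cast; ring
        rw [this]
        have : N - 1 + 1 = N := by omega
        rw [this, ZMod.natCast_self, Nat.cast_zero]
      rw [hNm]
      congr 1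
      rw [hN0]
    · -- k + 1 < N + 2
      rw [hgval k hk', hsucc, hgval (k + 1) hklt]
      rcases le_or_gt k v with h | h
      · rw [if_pos (by omega), if_pos (by omega), if_pos h]
        congr 1
        push_cast; ring
      · rcases eq_or_ne k (v + 1) with h' | h'
        · rw [if_pos (by omega), if_neg (by omega), if_neg (by omega), if_pos h', h']
          have : (v + 1 + 1 - 2 : ℕ) = v := by omega
          rw [this, hcast1, hcast]
          exact hX
        · have hk2 : ¬ k ≤ v + 1 := by omega
          rw [if_neg hk2, if_neg (by omega), if_neg (by omega), if_neg h']
          congr 1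
          have h2 : (2:ℕ) ≤ k := by omega
          have : (k + 1 - 2 : ℕ) = (k - 2) + 1 := by omega
          rw [this]
          push_cast; ring
  rw [hrow, hinter]
  ring
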